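/- Let v₁,…,v_k be a sequence of vertices where v_{i+1} ≠ v_i only when v_i and v_{i+1} swap adjacent ranks between f_i and f_{i+1} (i.e., f_i(v_i) < f_i(v_{i+1}) and f_{i+1}(v_i) > f_{i+1}(v_{i+1}), or symmetrically), and each f_{i+1} agrees with f_i except on at most one vertex whose value strictly increases. Then f_i(v_i) ≥ f₁(v₁) for all 1 ≤ i ≤ k. -/
import Mathlib


/-- for a sequence of fields where each step agrees with the previous one
except on at most one vertex whose value increases, and a tracking sequence of vertices
`v₁,…,v_k` that changes only when the tracked vertex swaps adjacent ranks with the next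
one, the value of the tracked vertex never drops below its initial value:
`f_i(v_i) ≥ f₁(v₁)` for all `i`. -/
theorem stmt_4 {V : Type*} {k : ℕ} (f : Fin (k + 1) → V → ℝ) (v : Fin (k + 1) → V)
    (hinj : ∀ i, Function.Injective (f i))
    (hmono : ∀ (i : Fin k) (x : V), f i.castSucc x ≤ f i.succ x)
    (hone : ∀ i : Fin k, ∃ w : V, ∀ x, x ≠ w → f i.castSucc x = f i.succ x)
    (hswap : ∀ i : Fin k, v i.succ ≠ v i.castSucc →
      (f i.castSucc (v i.castSucc) < f i.castSucc (v i.succ) ∧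
        f i.succ (v i.succ) < f i.succ (v i.castSucc)) ∨
      (f i.castSucc (v i.succ) < f i.castSucc (v i.castSucc) ∧
        f i.succ (v i.castSucc) < f i.succ (v i.succ))) :
    ∀ i, f 0 (v 0) ≤ f i (v i) := by
  have step : ∀ i : Fin k, f i.castSucc (v i.castSucc) ≤ f i.succ (v i.succ) := by
    intro i
    by_cases h : v i.succ = v i.castSucc
    · rw [h]; exact hmono i _
    · obtain ⟨w, hw⟩ := hone i
      rcases hswap i h with ⟨h1, h2⟩ | ⟨h1, h2⟩
      · by_cases hs : v i.succ = w
        · have hc : v i.castSucc ≠ w := fun hh => h (hs.trans hh.symm)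
          have e := hw _ hc
          linarith [hmono i (v i.succ)]
        · have e := hw _ hs
          linarith
      · by_cases hc : v i.castSucc = w
        · have hs : v i.succ ≠ w := fun hh => h (hh.trans hc.symm)
          have e := hw _ hs
          linarith [hmono i (v i.castSucc)]
        · have e := hw _ hc
          linarith
  intro i
  induction i using Fin.induction with
  | zero => exact le_refl _
  | succ j ih => exact le_trans ih (step j)
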